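/- For every string w of length n and every valid bidirectional macro scheme for w with k phrases, there exists a substring equation system of size k that represents w (i.e., w satisfies all constraints and is the unique string of length n over Σ satisfying them). Consequently s(w) ≤ b(w). -/

import Mathlib

/-- `u` occurs in `w` starting at 1-indexed position `i`. -/
def occursAt {α : Type*} (w u : List α) (i : ℕ) : Prop :=
  1 ≤ i ∧ i + u.length ≤ w.length + 1 ∧ (w.drop (i - 1)).take u.length = u

/-- `u` is a right extension in `w`: `u = x ++ [c]`, both `x++[c]` and `x++[c']`
occur in `w` for some `c' ≠ c`. -/
def RightExt {α : Type*} (w u : List α) : Prop :=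
  ∃ (x : List α) (c c' : α), c ≠ c' ∧ u = x ++ [c] ∧
    (x ++ [c]) <:+: w ∧ (x ++ [c']) <:+: w

/-- super-maximal right extension: not a proper suffix of another right extension. -/
def SupMaxExt {α : Type*} (w u : List α) : Prop :=
  RightExt w u ∧ ∀ v, RightExt w v → u <:+ v → u = v

def SRE {α : Type*} (w : List α) : Set (List α) := {u | SupMaxExt w u}

noncomputable def chi {α : Type*} (w : List α) : ℕ := (SRE w).ncard

/-- `w` ends with a character that occurs nowhere else. -/
def UniqueTerm {α : Type*} (w : List α) : Prop :=
  ∃ (v : List α) (d : α), w = v ++ [d] ∧ d ∉ v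

/-- substring equation system -/
structure SES (α : Type*) where
  n : ℕ
  Eqs : Finset (ℕ × ℕ × ℕ)
  Ch : Finset (ℕ × α)

def SES.valid {α : Type*} (E : SES α) : Prop :=
  (∀ e ∈ E.Eqs, 1 ≤ e.1 ∧ 1 ≤ e.2.1 ∧ 1 ≤ e.2.2 ∧
      e.1 + e.2.2 ≤ E.n + 1 ∧ e.2.1 + e.2.2 ≤ E.n + 1) ∧
  (∀ kc ∈ E.Ch, 1 ≤ kc.1 ∧ kc.1 ≤ E.n)

def SES.sat {α : Type*} (E : SES α) (w : List α) : Prop :=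
  w.length = E.n ∧
  (∀ e ∈ E.Eqs, (w.drop (e.1 - 1)).take e.2.2 = (w.drop (e.2.1 - 1)).take e.2.2) ∧
  (∀ kc ∈ E.Ch, w[kc.1 - 1]? = some kc.2)

def SES.represents {α : Type*} (E : SES α) (w : List α) : Prop :=
  E.sat w ∧ ∀ w' : List α, E.sat w' → w' = w

def SES.size {α : Type*} (E : SES α) : ℕ := E.Eqs.card + E.Ch.card

/-- minimum size of a valid SES representing `w` -/
noncomputable def sVal {α : Type*} (w : List α) : ℕ :=
  sInf {k | ∃ E : SES α, E.valid ∧ E.represents w ∧ E.size = k}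

/-- bidirectional macro scheme machinery -/
def phraseLen {α : Type*} : α ⊕ (ℕ × ℕ) → ℕ
  | Sum.inl _ => 1
  | Sum.inr (_, ℓ) => ℓ

def startPos {α : Type*} (ph : List (α ⊕ (ℕ × ℕ))) (t : ℕ) : ℕ :=
  1 + ((ph.take t).map phraseLen).sum

/-- the phrase list `ph` is a (content-correct) macro scheme for `w` -/
def BMSFor {α : Type*} (w : List α) (ph : List (α ⊕ (ℕ × ℕ))) : Prop :=
  (ph.map phraseLen).sum = w.length ∧
  ∀ t (h : t < ph.length),
    match ph.get ⟨t, h⟩ with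
    | Sum.inl c => w[startPos ph t - 1]? = some c
    | Sum.inr (p, ℓ) => 1 ≤ ℓ ∧ 1 ≤ p ∧ p + ℓ ≤ w.length + 1 ∧
        (w.drop (startPos ph t - 1)).take ℓ = (w.drop (p - 1)).take ℓ

/-- the transition function τ (on 0-based offsets) -/
def tauAux {α : Type*} : List (α ⊕ (ℕ × ℕ)) → ℕ → Option ℕ
  | [], _ => none
  | (Sum.inl _) :: rest, i => if i = 0 then none else tauAux rest (i - 1)
  | (Sum.inr (p, ℓ)) :: rest, i => if i < ℓ then some (p + i) else tauAux rest (i - ℓ)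

/-- τ on 1-indexed positions -/
def tauStep {α : Type*} (ph : List (α ⊕ (ℕ × ℕ))) (i : ℕ) : Option ℕ :=
  tauAux ph (i - 1)

/-- validity: every position reaches ⊥ after finitely many steps -/
def BMSValid {α : Type*} (ph : List (α ⊕ (ℕ × ℕ))) (n : ℕ) : Prop :=
  ∀ i, 1 ≤ i → i ≤ n →
    ∃ k, (fun o : Option ℕ => o.bind (tauStep ph))^[k] (some i) = none

noncomputable def bVal {α : Type*} (w : List α) : ℕ :=
  sInf {k | ∃ ph : List (α ⊕ (ℕ × ℕ)),
      BMSFor w ph ∧ BMSValid ph w.length ∧ ph.length = k}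

/-- string attractor -/
def IsAttractor {α : Type*} (w : List α) (Γ : Finset ℕ) : Prop :=
  (∀ p ∈ Γ, 1 ≤ p ∧ p ≤ w.length) ∧
  ∀ u : List α, u ≠ [] → u <:+: w →
    ∃ i, occursAt w u i ∧ ∃ p ∈ Γ, i ≤ p ∧ p ≤ i + u.length - 1

noncomputable def gammaVal {α : Type*} (w : List α) : ℕ :=
  sInf {k | ∃ Γ : Finset ℕ, IsAttractor w Γ ∧ Γ.card = k}

/-- Thue–Morse words over Bool (`false` = a, `true` = b) -/
def tm : ℕ → List Bool
  | 0 => [false]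
  | n + 1 => (tm n).flatMap (fun b => [b, !b])

/-- leftmost occurrence -/
def leftmostOcc {α : Type*} (w v : List α) (i : ℕ) : Prop :=
  occursAt w v i ∧ ∀ i', occursAt w v i' → i ≤ i'

/-- generating pairs of the equivalence `≡_χ` -/
def GenPair {α : Type*} (w : List α) (j j' : ℕ) : Prop :=
  ∃ (y z x : List α) (c c' : α) (i i' : ℕ),
    x ≠ [] ∧
    SupMaxExt w (y ++ x ++ [c]) ∧ SupMaxExt w (z ++ x ++ [c']) ∧
    (y = [] ∨ z = [] ∨ y.getLast? ≠ z.getLast?) ∧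
    leftmostOcc w (y ++ x ++ [c]) i ∧ leftmostOcc w (z ++ x ++ [c']) i' ∧
    ∃ k < x.length, j = i + y.length + k ∧ j' = i' + z.length + k

def chiEquiv {α : Type*} (w : List α) : ℕ → ℕ → Prop := Relation.EqvGen (GenPair w)
section Aux
variable {α : Type*}


def psum (ph : List (α ⊕ (ℕ × ℕ))) (t : ℕ) : ℕ := ((ph.take t).map phraseLen).sum

lemma psum_cons (a : α ⊕ (ℕ × ℕ)) (ph : List (α ⊕ (ℕ × ℕ))) (t : ℕ) :
    psum (a :: ph) (t + 1) = phraseLen a + psum ph t := by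
  simp [psum]

lemma psum_succ (ph : List (α ⊕ (ℕ × ℕ))) (t : ℕ) (h : t < ph.length) :
    psum ph (t + 1) = psum ph t + phraseLen (ph.get ⟨t, h⟩) := by
  induction ph generalizing t with
  | nil => simp at h
  | cons a rest ih =>
    cases t with
    | zero => simp [psum]
    | succ t =>
      simp only [psum_cons, List.get_cons_succ]
      rw [ih t (by simpa using h), Nat.add_assoc]

lemma sum_take_le (l : List ℕ) (t : ℕ) : (l.take t).sum ≤ l.sum := by
  calc (l.take t).sum ≤ (l.take t).sum + (l.drop t).sum := Nat.le_add_right _ _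
    _ = l.sum := by rw [← List.sum_append, List.take_append_drop]

lemma psum_le_sum (ph : List (α ⊕ (ℕ × ℕ))) (t : ℕ) :
    psum ph t ≤ (ph.map phraseLen).sum := by
  rw [psum, List.map_take]
  exact sum_take_le _ t

lemma psum_mono (ph : List (α ⊕ (ℕ × ℕ))) {t t' : ℕ} (h : t ≤ t') :
    psum ph t ≤ psum ph t' := by
  rw [psum, psum, List.map_take, List.map_take,
    show t = min t t' from (Nat.min_eq_left h).symm, ← List.take_take]
  exact sum_take_le _ t


lemma tauAux_eq_none {α : Type*} (ph : List (α ⊕ (ℕ × ℕ))) :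
    ∀ m : ℕ, m < (ph.map phraseLen).sum → tauAux ph m = none →
    ∃ t, ∃ h : t < ph.length, ∃ c, ph.get ⟨t, h⟩ = Sum.inl c ∧ m = psum ph t := by
  induction ph with
  | nil => intro m hm; simp at hm
  | cons a rest ih =>
    intro m hm hnone
    match a with
    | Sum.inl c =>
      by_cases h0 : m = 0
      · exact ⟨0, by simp, c, rfl, by simp [h0, psum]⟩
      · have h1 : 1 ≤ m := Nat.one_le_iff_ne_zero.mpr h0
        have hnone' : tauAux rest (m - 1) = none := by
          simpa [tauAux, h0] using hnone
        have hm' : m - 1 < (rest.map phraseLen).sum := by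
          simp only [List.map_cons, List.sum_cons, phraseLen] at hm
          omega
        obtain ⟨t, h, c', hget, hps⟩ := ih (m - 1) hm' hnone'
        refine ⟨t + 1, by simpa using Nat.succ_lt_succ h, c', by simpa using hget, ?_⟩
        rw [psum_cons]
        simp only [phraseLen]
        omega
    | Sum.inr (p, ℓ) =>
      by_cases h0 : m < ℓ
      · simp [tauAux, h0] at hnone
      · have hnone' : tauAux rest (m - ℓ) = none := by
          simpa [tauAux, h0] using hnone
        have hm' : m - ℓ < (rest.map phraseLen).sum := by
          simp only [List.map_cons, List.sum_cons, phraseLen] at hm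
          omega
        obtain ⟨t, h, c', hget, hps⟩ := ih (m - ℓ) hm' hnone'
        refine ⟨t + 1, by simpa using Nat.succ_lt_succ h, c', by simpa using hget, ?_⟩
        rw [psum_cons]
        simp only [phraseLen]
        omega

lemma tauAux_eq_some {α : Type*} (ph : List (α ⊕ (ℕ × ℕ))) :
    ∀ m j : ℕ, tauAux ph m = some j →
    ∃ t, ∃ h : t < ph.length, ∃ p ℓ, ph.get ⟨t, h⟩ = Sum.inr (p, ℓ) ∧
      psum ph t ≤ m ∧ m < psum ph t + ℓ ∧ j = p + (m - psum ph t) := by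
  induction ph with
  | nil => intro m j hj; simp [tauAux] at hj
  | cons a rest ih =>
    intro m j hj
    match a with
    | Sum.inl c =>
      by_cases h0 : m = 0
      · simp [tauAux, h0] at hj
      · have hj' : tauAux rest (m - 1) = some j := by simpa [tauAux, h0] using hj
        obtain ⟨t, h, p, ℓ, hget, h1, h2, h3⟩ := ih (m - 1) j hj'
        refine ⟨t + 1, by simpa using Nat.succ_lt_succ h, p, ℓ, by simpa using hget, ?_, ?_, ?_⟩ <;>
          · rw [psum_cons]; simp only [phraseLen]; omega
    | Sum.inr (p', ℓ') =>
      by_cases h0 : m < ℓ'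
      · have : p' + m = j := by simpa [tauAux, h0] using hj
        exact ⟨0, by simp, p', ℓ', rfl, by simp [psum], by simpa [psum] using h0,
          by simp [psum]; omega⟩
      · have hj' : tauAux rest (m - ℓ') = some j := by simpa [tauAux, h0] using hj
        obtain ⟨t, h, p, ℓ, hget, h1, h2, h3⟩ := ih (m - ℓ') j hj'
        refine ⟨t + 1, by simpa using Nat.succ_lt_succ h, p, ℓ, by simpa using hget, ?_, ?_, ?_⟩ <;>
          · rw [psum_cons]; simp only [phraseLen]; omega

end Aux


lemma getLeft_of_eq {α β : Type*} {s : α ⊕ β} {c : α} (h : s = Sum.inl c) (hl : s.isLeft) :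
    s.getLeft hl = c := by subst h; rfl

lemma getRight_of_eq {α β : Type*} {s : α ⊕ β} {c : β} (h : s = Sum.inr c) (hr : s.isRight) :
    s.getRight hr = c := by subst h; rfl

lemma seg_get? {α : Type*} (w : List α) (a b ℓ k : ℕ) (hk : k < ℓ)
    (h : (w.drop a).take ℓ = (w.drop b).take ℓ) :
    w[a + k]? = w[b + k]? := by
  have h2 := congrArg (fun l : List α => l[k]?) h
  simp only [List.getElem?_take, if_pos hk, List.getElem?_drop] at h2
  simpa using h2

lemma phraseLen_pos {α : Type*} {w : List α} {ph : List (α ⊕ (ℕ × ℕ))} (hbms : BMSFor w ph)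
    (t : ℕ) (h : t < ph.length) : 1 ≤ phraseLen (ph.get ⟨t, h⟩) := by
  have h2 := hbms.2 t h
  rcases hg : ph.get ⟨t, h⟩ with c | ⟨p, ℓ⟩
  · simp [phraseLen]
  · rw [hg] at h2
    simpa [phraseLen] using h2.1

lemma psum_lt_of_lt {α : Type*} {w : List α} {ph : List (α ⊕ (ℕ × ℕ))} (hbms : BMSFor w ph)
    {t t' : ℕ} (h : t < t') (h' : t' ≤ ph.length) : psum ph t < psum ph t' := by
  have ht : t < ph.length := lt_of_lt_of_le h h'
  have h1 := psum_succ ph t ht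
  have hp := phraseLen_pos hbms t ht
  have h2 := psum_mono ph (show t + 1 ≤ t' from h)
  omega

lemma exists_SES_of_BMS {α : Type*} (w : List α) (ph : List (α ⊕ (ℕ × ℕ)))
    (hbms : BMSFor w ph) (hvalid : BMSValid ph w.length) :
    ∃ E : SES α, E.valid ∧ E.represents w ∧ E.size = ph.length := by
  classical
  have hsum : (ph.map phraseLen).sum = w.length := hbms.1
  have hinj : ∀ t t' : Fin ph.length, psum ph t.1 = psum ph t'.1 → t = t' := by
    intro t t' hps
    rcases Nat.lt_trichotomy t.1 t'.1 with hlt | heq | hgt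
    · exact absurd hps (Nat.ne_of_lt (psum_lt_of_lt hbms hlt t'.2.le))
    · exact Fin.ext heq
    · exact absurd hps.symm (Nat.ne_of_lt (psum_lt_of_lt hbms hgt t.2.le))
  set gC : {t : Fin ph.length // (ph.get t).isLeft} → ℕ × α :=
    fun x => (1 + psum ph x.1.1, (ph.get x.1).getLeft x.2) with hgC
  set gE : {t : Fin ph.length // (ph.get t).isRight} → ℕ × ℕ × ℕ :=
    fun x => (1 + psum ph x.1.1, (ph.get x.1).getRight x.2) with hgE
  set ChF : Finset (ℕ × α) := Finset.univ.image gC with hChF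
  set EqF : Finset (ℕ × ℕ × ℕ) := Finset.univ.image gE with hEqF
  set E : SES α := ⟨w.length, EqF, ChF⟩ with hE
  -- membership intro
  have memC : ∀ {t : ℕ} (h : t < ph.length) {c : α}, ph.get ⟨t, h⟩ = Sum.inl c →
      (1 + psum ph t, c) ∈ ChF := by
    intro t h c hg
    have hl : (ph.get ⟨t, h⟩).isLeft := by rw [hg]; rfl
    refine Finset.mem_image.mpr ⟨⟨⟨t, h⟩, hl⟩, Finset.mem_univ _, ?_⟩
    exact congrArg (fun a => (1 + psum ph t, a)) (getLeft_of_eq hg hl)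
  have memE : ∀ {t : ℕ} (h : t < ph.length) {p ℓ : ℕ}, ph.get ⟨t, h⟩ = Sum.inr (p, ℓ) →
      (1 + psum ph t, p, ℓ) ∈ EqF := by
    intro t h p ℓ hg
    have hr : (ph.get ⟨t, h⟩).isRight := by rw [hg]; rfl
    refine Finset.mem_image.mpr ⟨⟨⟨t, h⟩, hr⟩, Finset.mem_univ _, ?_⟩
    exact congrArg (fun a => (1 + psum ph t, a)) (getRight_of_eq hg hr)
  -- membership elim
  have memC' : ∀ kc ∈ ChF, ∃ (t : ℕ) (h : t < ph.length) (c : α),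
      ph.get ⟨t, h⟩ = Sum.inl c ∧ kc = (1 + psum ph t, c) := by
    intro kc hkc
    obtain ⟨x, -, rfl⟩ := Finset.mem_image.mp hkc
    rcases hg : ph.get x.1 with c | pl
    · exact ⟨x.1.1, x.1.2, c, hg,
        congrArg (fun a => (1 + psum ph x.1.1, a)) (getLeft_of_eq hg x.2)⟩
    · exact absurd x.2 (by rw [hg]; simp)
  have memE' : ∀ e ∈ EqF, ∃ (t : ℕ) (h : t < ph.length) (p ℓ : ℕ),
      ph.get ⟨t, h⟩ = Sum.inr (p, ℓ) ∧ e = (1 + psum ph t, p, ℓ) := by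
    intro e he
    obtain ⟨x, -, rfl⟩ := Finset.mem_image.mp he
    rcases hg : ph.get x.1 with c | ⟨p, ℓ⟩
    · exact absurd x.2 (by rw [hg]; simp)
    · exact ⟨x.1.1, x.1.2, p, ℓ, hg,
        congrArg (fun a => (1 + psum ph x.1.1, a)) (getRight_of_eq hg x.2)⟩
  -- bound: psum t + phraseLen ≤ n
  have hbound : ∀ (t : ℕ) (h : t < ph.length),
      psum ph t + phraseLen (ph.get ⟨t, h⟩) ≤ w.length := by
    intro t h
    rw [← psum_succ ph t h, ← hsum]
    exact psum_le_sum ph (t + 1)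
  refine ⟨E, ⟨?_, ?_⟩, ⟨⟨rfl, ?_, ?_⟩, ?_⟩, ?_⟩
  · -- valid Eqs
    intro e he
    simp only [show E.n = w.length from rfl]
    obtain ⟨t, h, p, ℓ, hg, rfl⟩ := memE' e he
    have h2 := hbms.2 t h; rw [hg] at h2
    obtain ⟨hℓ, hp, hpl, -⟩ := h2
    have hb := hbound t h
    rw [hg] at hb
    simp only [phraseLen] at hb
    refine ⟨by omega, hp, hℓ, ?_, hpl⟩
    show 1 + psum ph t + ℓ ≤ w.length + 1
    omega
  · -- valid Ch
    intro kc hkc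
    simp only [show E.n = w.length from rfl]
    obtain ⟨t, h, c, hg, rfl⟩ := memC' kc hkc
    have hb := hbound t h
    rw [hg] at hb
    simp only [phraseLen] at hb
    exact ⟨by omega, by omega⟩
  · -- sat Eqs for w
    intro e he
    obtain ⟨t, h, p, ℓ, hg, rfl⟩ := memE' e he
    have h2 := hbms.2 t h; rw [hg] at h2
    have := h2.2.2.2
    simpa [startPos, psum] using this
  · -- sat Ch for w
    intro kc hkc
    obtain ⟨t, h, c, hg, rfl⟩ := memC' kc hkc
    have h2 := hbms.2 t h; rw [hg] at h2
    simpa [startPos, psum] using h2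
  · -- uniqueness
    intro w' hs
    have hlen' : w'.length = w.length := hs.1
    have key : ∀ (k m : ℕ), m < w.length →
        (fun o : Option ℕ => o.bind (tauStep ph))^[k] (some (m + 1)) = none →
        w'[m]? = w[m]? := by
      intro k
      induction k with
      | zero => intro m _ h0; simp at h0
      | succ k ih =>
        intro m hm hit
        rw [Function.iterate_succ_apply] at hit
        have hbind : (some (m + 1)).bind (tauStep ph) = tauAux ph m := by
          simp [Option.bind, tauStep]
        rw [hbind] at hit
        cases hcase : tauAux ph m with
        | none =>
          obtain ⟨t, h, c, hget, rfl⟩ := tauAux_eq_none ph m (by rw [hsum]; exact hm) hcase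
          have h2 := hbms.2 t h; rw [hget] at h2
          have hw : w[psum ph t]? = some c := by simpa [startPos, psum] using h2
          have hw' := hs.2.2 _ (memC h hget)
          rw [show 1 + psum ph t - 1 = psum ph t by omega] at hw'
          rw [hw', hw]
        | some j =>
          rw [hcase] at hit
          obtain ⟨t, h, p, ℓ, hget, hle, hlt, rfl⟩ := tauAux_eq_some ph m j hcase
          have h2 := hbms.2 t h; rw [hget] at h2
          obtain ⟨hℓ, hp, hpl, hseg⟩ := h2
          have hseg' := hs.2.1 _ (memE h hget)
          rw [show 1 + psum ph t - 1 = psum ph t by omega] at hseg'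
          have hk0 : m - psum ph t < ℓ := by omega
          have e1 : w[psum ph t + (m - psum ph t)]? = w[(p - 1) + (m - psum ph t)]? :=
            seg_get? w _ _ ℓ _ hk0 (by simpa [startPos, psum] using hseg)
          have e2 : w'[psum ph t + (m - psum ph t)]? = w'[(p - 1) + (m - psum ph t)]? :=
            seg_get? w' _ _ ℓ _ hk0 hseg'
          have hm' : p - 1 + (m - psum ph t) < w.length := by omega
          have hit' : (fun o : Option ℕ => o.bind (tauStep ph))^[k]
              (some (p - 1 + (m - psum ph t) + 1)) = none := by
            rw [show p - 1 + (m - psum ph t) + 1 = p + (m - psum ph t) by omega]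
            exact hit
          have hrec := ih _ hm' hit'
          have hmeq : m = psum ph t + (m - psum ph t) := by omega
          rw [hmeq]
          rw [e1, e2, hrec]
    apply List.ext_getElem?
    intro i
    by_cases hi : i < w.length
    · obtain ⟨k, hk⟩ := hvalid (i + 1) (by omega) (by omega)
      exact key k i hi hk
    · rw [List.getElem?_eq_none_iff.mpr (by omega), List.getElem?_eq_none_iff.mpr (by omega)]
  · -- size
    have hCinj : Function.Injective gC := by
      intro x y hxy
      have : psum ph x.1.1 = psum ph y.1.1 := by
        have := congrArg Prod.fst hxy
        simpa [hgC] using this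
      exact Subtype.ext (hinj _ _ this)
    have hEinj : Function.Injective gE := by
      intro x y hxy
      have : psum ph x.1.1 = psum ph y.1.1 := by
        have := congrArg Prod.fst hxy
        simpa [hgE] using this
      exact Subtype.ext (hinj _ _ this)
    have hc1 : ChF.card = Fintype.card {t : Fin ph.length // (ph.get t).isLeft} := by
      rw [hChF, Finset.card_image_of_injective _ hCinj, Finset.card_univ]
    have hc2 : EqF.card = Fintype.card {t : Fin ph.length // (ph.get t).isRight} := by
      rw [hEqF, Finset.card_image_of_injective _ hEinj, Finset.card_univ]
    show EqF.card + ChF.card = ph.length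
    rw [hc1, hc2, Fintype.card_subtype, Fintype.card_subtype]
    have hfilter : (Finset.univ.filter fun t : Fin ph.length => (ph.get t).isRight)
        = Finset.univ.filter fun t : Fin ph.length => ¬ (ph.get t).isLeft := by
      apply Finset.filter_congr
      intro t _
      rcases ph.get t with c | pl <;> simp
    rw [hfilter, add_comm]
    rw [Finset.card_filter_add_card_filter_not]
    simp


theorem stmt3 {α : Type*} (w : List α) (ph : List (α ⊕ (ℕ × ℕ)))
    (hbms : BMSFor w ph) (hvalid : BMSValid ph w.length) :
    (∃ E : SES α, E.valid ∧ E.represents w ∧ E.size = ph.length) ∧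
    sVal w ≤ bVal w := by
  obtain ⟨E, hEv, hEr, hEs⟩ := exists_SES_of_BMS w ph hbms hvalid
  refine ⟨⟨E, hEv, hEr, hEs⟩, ?_⟩
  have hmem : bVal w ∈ {k | ∃ ph' : List (α ⊕ (ℕ × ℕ)),
      BMSFor w ph' ∧ BMSValid ph' w.length ∧ ph'.length = k} :=
    Nat.sInf_mem ⟨ph.length, ph, hbms, hvalid, rfl⟩
  obtain ⟨ph', hb', hv', hl'⟩ := hmem
  obtain ⟨E', h1, h2, h3⟩ := exists_SES_of_BMS w ph' hb' hv'
  exact Nat.sInf_le ⟨E', h1, h2, by rw [h3, hl']⟩
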